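/- Let m ≥ 8 and n ≥ 3m² − 5m + 2 be integers. Set q = 3m² − 42m + 146 and partition the first 3m² − 6m + 10 indices of the y-variables into consecutive blocks: A of size q; for each t ∈ {2,3,4} a block B_t of size 12m − 72; for each pair {t,t'} ⊆ {2,3,4} a block C_{t,t'} of size 24; for each t ∈ {2,3,4} a block D_t of size 2; and a block D₅ of size 2. Let E₁ = {x₀,x₁} ∪ {y_j : j ∈ A ∪ B₂ ∪ B₃ ∪ B₄ ∪ C₂,₃ ∪ C₂,₄ ∪ C₃,₄}; for t ∈ {2,3,4}, E_t = {x_{2t−2}, x_{2t−1}} ∪ {y_j : j ∈ B_t ∪ (the two blocks C_{t,t'} with t' ≠ t) ∪ D_t}; and E₅ = {y_j : j ∈ D₅}. Then there exist, in (ℂ^{m+1} ∖ {0}) × (ℂ^{n+1} ∖ {0}): 72 points satisfying E₅ = 0, and for each pair {t,t'} ⊆ {2,3,4}, 2 points satisfying E₁ = E_t = E_{t'} = 0, such that the only bidegree (1,2) polynomial f lying simultaneously in the ideals generated by E₁, E₂, E₃, E₄ and E₅, and singular at all chosen points, is f = 0. (This states that the equiabundant configuration E₁(m,n) of the paper is non-defective.)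 -/

import Mathlib

open MvPolynomial

/-- The variables `x_0, …, x_m, y_0, …, y_n` of the ring `ℂ[x_0,…,x_m,y_0,…,y_n]`. -/
abbrev SegreVar (m n : ℕ) : Type := Fin (m + 1) ⊕ Fin (n + 1)

/-- A point of `ℂ^{m+1} × ℂ^{n+1}`. -/
abbrev SegrePt (m n : ℕ) : Type := (Fin (m + 1) → ℂ) × (Fin (n + 1) → ℂ)

/-- The coordinate function of a point, indexed by the variables. -/
def ptFun {m n : ℕ} (P : SegrePt m n) : SegreVar m n → ℂ := Sum.elim P.1 P.2

/-- The point lies in `(ℂ^{m+1} ∖ {0}) × (ℂ^{n+1} ∖ {0})`. -/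
def ValidPt {m n : ℕ} (P : SegrePt m n) : Prop := P.1 ≠ 0 ∧ P.2 ≠ 0

/-- `f` has bidegree `(1,2)`: it is a `ℂ`-linear combination of monomials `x_i * y_j * y_k`. -/
def IsBidegree12 {m n : ℕ} (f : MvPolynomial (SegreVar m n) ℂ) : Prop :=
  f ∈ Submodule.span ℂ
    {g : MvPolynomial (SegreVar m n) ℂ |
      ∃ (i : Fin (m + 1)) (j k : Fin (n + 1)),
        g = X (Sum.inl i) * X (Sum.inr j) * X (Sum.inr k)}

/-- `f` is singular at `P`: all `m+n+2` partial derivatives of `f` vanish at `P`. -/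
def SingularAt {m n : ℕ} (f : MvPolynomial (SegreVar m n) ℂ) (P : SegrePt m n) : Prop :=
  ∀ v : SegreVar m n, eval (ptFun P) (pderiv v f) = 0

/-- The point `P` satisfies the equations `E = 0`. -/
def SatisfiesEqs {m n : ℕ} (P : SegrePt m n) (E : Set (SegreVar m n)) : Prop :=
  ∀ v ∈ E, ptFun P v = 0

/-- The ideal generated by the variables in `E`. -/
noncomputable def varIdeal (m n : ℕ) (E : Set (SegreVar m n)) : Ideal (MvPolynomial (SegreVar m n) ℂ) :=
  Ideal.span ((fun v => (X v : MvPolynomial (SegreVar m n) ℂ)) '' E)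

/-- The set of variables `x_i` with `a ≤ i < b`. -/
def xRange (m n a b : ℕ) : Set (SegreVar m n) :=
  {v | ∃ i : Fin (m + 1), v = Sum.inl i ∧ a ≤ (i : ℕ) ∧ (i : ℕ) < b}

/-- The set of variables `y_j` with `a ≤ j < b`. -/
def yRange (m n a b : ℕ) : Set (SegreVar m n) :=
  {v | ∃ j : Fin (n + 1), v = Sum.inr j ∧ a ≤ (j : ℕ) ∧ (j : ℕ) < b}

/- Blocks of y-indices (consecutive): `A = [0,q)`; `B_t = [q+(t-2)β, q+(t-1)β)` for
`t ∈ {2,3,4}` with `β = 12m - 72`; `C₂₃ = [q+3β, q+3β+24)`, `C₂₄ = [q+3β+24, q+3β+48)`,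
`C₃₄ = [q+3β+48, q+3β+72)`; `D_t = [q+3β+72+2(t-2), q+3β+74+2(t-2))` for `t ∈ {2,3,4}`;
`D₅ = [q+3β+78, q+3β+80)`. -/

/-- `E₁ = {x₀,x₁} ∪ {y_j : j ∈ A ∪ B₂ ∪ B₃ ∪ B₄ ∪ C₂₃ ∪ C₂₄ ∪ C₃₄}`. -/
def E1E₁ (m n q β : ℕ) : Set (SegreVar m n) :=
  xRange m n 0 2 ∪ yRange m n 0 (q + 3 * β + 72)

/-- `E₂ = {x₂,x₃} ∪ {y_j : j ∈ B₂ ∪ C₂₃ ∪ C₂₄ ∪ D₂}`. -/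
def E1E₂ (m n q β : ℕ) : Set (SegreVar m n) :=
  xRange m n 2 4 ∪ yRange m n q (q + β) ∪ yRange m n (q + 3 * β) (q + 3 * β + 48)
    ∪ yRange m n (q + 3 * β + 72) (q + 3 * β + 74)

/-- `E₃ = {x₄,x₅} ∪ {y_j : j ∈ B₃ ∪ C₂₃ ∪ C₃₄ ∪ D₃}`. -/
def E1E₃ (m n q β : ℕ) : Set (SegreVar m n) :=
  xRange m n 4 6 ∪ yRange m n (q + β) (q + 2 * β) ∪ yRange m n (q + 3 * β) (q + 3 * β + 24)
    ∪ yRange m n (q + 3 * β + 48) (q + 3 * β + 72)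
    ∪ yRange m n (q + 3 * β + 74) (q + 3 * β + 76)

/-- `E₄ = {x₆,x₇} ∪ {y_j : j ∈ B₄ ∪ C₂₄ ∪ C₃₄ ∪ D₄}`. -/
def E1E₄ (m n q β : ℕ) : Set (SegreVar m n) :=
  xRange m n 6 8 ∪ yRange m n (q + 2 * β) (q + 3 * β)
    ∪ yRange m n (q + 3 * β + 24) (q + 3 * β + 72)
    ∪ yRange m n (q + 3 * β + 76) (q + 3 * β + 78)

/-- `E₅ = {y_j : j ∈ D₅}`. -/
def E1E₅ (m n q β : ℕ) : Set (SegreVar m n) :=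
  yRange m n (q + 3 * β + 78) (q + 3 * β + 80)

/-! ### Auxiliary machinery -/

@[simp] lemma ptFun_inl {m n : ℕ} (P : SegrePt m n) (i : Fin (m+1)) :
    ptFun P (Sum.inl i) = P.1 i := rfl

@[simp] lemma ptFun_inr {m n : ℕ} (P : SegrePt m n) (j : Fin (n+1)) :
    ptFun P (Sum.inr j) = P.2 j := rfl

noncomputable def rep13 {m n : ℕ} (i : Fin (m+1)) (j k : Fin (n+1)) : SegreVar m n →₀ ℕ :=
  Finsupp.single (Sum.inl i) 1 + Finsupp.single (Sum.inr j) 1 + Finsupp.single (Sum.inr k) 1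

lemma rep13_swap {m n : ℕ} (i : Fin (m+1)) (j k : Fin (n+1)) :
    rep13 i j k = rep13 i k j := by
  simp only [rep13]; exact add_right_comm _ _ _

def PatNum13 (Q i j k : ℕ) : Prop :=
  (k = Q + 78 ∨ k = Q + 79) ∧
  ((Q ≤ j ∧ j < Q + 24 ∧ (i = 6 ∨ i = 7)) ∨ (Q + 24 ≤ j ∧ j < Q + 48 ∧ (i = 4 ∨ i = 5)) ∨
   (Q + 48 ≤ j ∧ j < Q + 72 ∧ (i = 2 ∨ i = 3)))

lemma keys13 {m n : ℕ} {i : Fin (m+1)} {j k : Fin (n+1)} {v : SegreVar m n}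
    (h : rep13 i j k v ≠ 0) : v = Sum.inl i ∨ v = Sum.inr j ∨ v = Sum.inr k := by
  by_contra hc
  push_neg at hc
  apply h
  simp only [rep13, Finsupp.add_apply, Finsupp.single_apply]
  rw [if_neg (fun h' => hc.1 h'.symm), if_neg (fun h' => hc.2.1 h'.symm),
    if_neg (fun h' => hc.2.2 h'.symm)]
  simp

lemma trip_eq13 {σ : Type*} [DecidableEq σ] (x b c : σ) (r : ℂ) :
    (monomial (Finsupp.single x 1 + Finsupp.single b 1 + Finsupp.single c 1) r :
      MvPolynomial σ ℂ) = C r * X x * X b * X c := by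
  rw [monomial_add_single, monomial_add_single, pow_one, pow_one]
  congr 1; congr 1
  rw [← zero_add (Finsupp.single x 1), monomial_add_single, pow_one, monomial_zero']

lemma eval_pderiv_trip13 {σ : Type*} [DecidableEq σ] (g : σ → ℂ) (v x b c : σ) (r : ℂ) :
    eval g (pderiv v (monomial (Finsupp.single x 1 + Finsupp.single b 1 + Finsupp.single c 1) r)) =
      r * ((if x = v then g b * g c else 0) + (if b = v then g x * g c else 0)
        + (if c = v then g x * g b else 0)) := by
  rw [trip_eq13]
  simp only [pderiv_mul, pderiv_C, pderiv_X, map_add, map_mul, eval_C, eval_X, zero_mul,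
    Pi.single_apply, map_one, map_zero, mul_zero, apply_ite (eval g), mul_ite, ite_mul]
  split_ifs <;> ring

lemma bide_supp13 {m n : ℕ} {f : MvPolynomial (SegreVar m n) ℂ} (h : IsBidegree12 f) :
    ∀ d ∈ f.support, ∃ i j k, d = rep13 i j k := by
  refine Submodule.span_induction (p := fun g _ => ∀ d ∈ g.support,
    ∃ i j k, d = rep13 (m := m) (n := n) i j k) ?_ ?_ ?_ ?_ h
  · rintro g ⟨i, j, k, rfl⟩ d hd
    have hg : (X (Sum.inl i) * X (Sum.inr j) * X (Sum.inr k) : MvPolynomial (SegreVar m n) ℂ)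
        = monomial (rep13 i j k) 1 := by
      rw [rep13, trip_eq13]; simp
    rw [hg, support_monomial] at hd
    simp only [one_ne_zero, if_false, Finset.mem_singleton] at hd
    exact ⟨i, j, k, hd⟩
  · simp
  · intro a b _ _ hA hB d hd
    rcases Finset.mem_union.mp (MvPolynomial.support_add hd) with h' | h'
    · exact hA d h'
    · exact hB d h'
  · intro r g _ hG d hd
    exact hG d (MvPolynomial.support_smul hd)

lemma kill13 {m n : ℕ} (Q : ℕ) (f : MvPolynomial (SegreVar m n) ℂ)
    (hsupp : ∀ d ∈ f.support, ∃ i j k, d = rep13 i j k ∧ PatNum13 Q (i:ℕ) (j:ℕ) (k:ℕ))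
    (i₀ : Fin (m+1)) (j₀ k₀ : Fin (n+1)) (hpat : PatNum13 Q (i₀:ℕ) (j₀:ℕ) (k₀:ℕ))
    (u w : Fin (n+1)) (huw : (u = j₀ ∧ w = k₀) ∨ (u = k₀ ∧ w = j₀))
    (p : SegrePt m n)
    (hp1 : ∀ i', p.1 i' = if (i':ℕ) = (i₀:ℕ) then 1 else 0)
    (hp2 : ∀ j', p.2 j' = if (j':ℕ) = (w:ℕ) then 1 else 0)
    (hsing : eval (ptFun p) (pderiv (Sum.inr u) f) = 0) :
    coeff (rep13 i₀ j₀ k₀) f = 0 := by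
  simp only [PatNum13] at hpat
  by_cases hmem : rep13 i₀ j₀ k₀ ∈ f.support
  swap
  · exact notMem_support_iff.mp hmem
  rw [← support_sum_monomial_coeff f, map_sum, map_sum] at hsing
  rw [Finset.sum_eq_single_of_mem _ hmem ?other] at hsing
  case other =>
    intro d hd hne
    obtain ⟨i, j, k, rfl, hpd⟩ := hsupp d hd
    simp only [PatNum13] at hpd
    rw [rep13, eval_pderiv_trip13]
    have hxu : ¬ ((Sum.inl i : SegreVar m n) = Sum.inr u) := by simp
    rw [if_neg hxu]
    rcases huw with ⟨rfl, rfl⟩ | ⟨rfl, rfl⟩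
    · have hku : ¬ ((Sum.inr k : SegreVar m n) = Sum.inr u) := by
        simp only [Sum.inr.injEq, Fin.ext_iff]; omega
      rw [if_neg hku]
      by_cases hju : (Sum.inr j : SegreVar m n) = Sum.inr u
      · rw [if_pos hju]
        have hj' : j = u := Sum.inr.inj hju
        by_cases hii : (i:ℕ) = (i₀:ℕ)
        · by_cases hkk : (k:ℕ) = (w:ℕ)
          · exact absurd (by rw [hj', Fin.ext hii, Fin.ext hkk]) hne
          · rw [ptFun_inr, hp2 k, if_neg hkk]
            ring
        · rw [ptFun_inl, hp1 i, if_neg hii]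
          ring
      · rw [if_neg hju]; ring
    · have hju : ¬ ((Sum.inr j : SegreVar m n) = Sum.inr u) := by
        simp only [Sum.inr.injEq, Fin.ext_iff]; omega
      rw [if_neg hju]
      by_cases hku : (Sum.inr k : SegreVar m n) = Sum.inr u
      · rw [if_pos hku]
        have hk' : k = u := Sum.inr.inj hku
        by_cases hii : (i:ℕ) = (i₀:ℕ)
        · by_cases hjj : (j:ℕ) = (w:ℕ)
          · exact absurd (by rw [hk', Fin.ext hii, Fin.ext hjj]) hne
          · rw [ptFun_inr, hp2 j, if_neg hjj]
            ring
        · rw [ptFun_inl, hp1 i, if_neg hii]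
          ring
      · rw [if_neg hku]; ring
  · rw [rep13, eval_pderiv_trip13] at hsing
    rcases huw with ⟨rfl, rfl⟩ | ⟨rfl, rfl⟩
    · have hwu : ¬ ((w:ℕ) = (u:ℕ)) := by omega
      have huw2 : ¬ ((u:ℕ) = (w:ℕ)) := by omega
      simp only [ptFun_inl, ptFun_inr, hp1, hp2, Sum.inr.injEq, Fin.ext_iff, reduceCtorEq,
        if_false, hwu, huw2, if_true, eq_self_iff_true, one_mul, mul_one, zero_add, add_zero,
        mul_zero, zero_mul, ite_true, ite_false] at hsing
      rw [rep13]; simpa using hsing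
    · have hwu : ¬ ((w:ℕ) = (u:ℕ)) := by omega
      have huw2 : ¬ ((u:ℕ) = (w:ℕ)) := by omega
      simp only [ptFun_inl, ptFun_inr, hp1, hp2, Sum.inr.injEq, Fin.ext_iff, reduceCtorEq,
        if_false, hwu, huw2, if_true, eq_self_iff_true, one_mul, mul_one, zero_add, add_zero,
        mul_zero, zero_mul, ite_true, ite_false] at hsing
      rw [rep13]; simpa using hsing

/-! ### Points -/

def purePt (m n : ℕ) (a b : ℕ) : SegrePt m n :=
  (fun i => if (i:ℕ) = a then 1 else 0, fun j => if (j:ℕ) = b then 1 else 0)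

def xnum13 (t : ℕ) : ℕ := if t < 24 then 6 else if t < 48 then 4 else 2

lemma xnum13_le (t : ℕ) : xnum13 t ≤ 6 := by unfold xnum13; split_ifs <;> omega

lemma valid_purePt {m n a b : ℕ} (ha : a ≤ m) (hb : b ≤ n) : ValidPt (purePt m n a b) := by
  constructor
  · intro h
    have := congrFun h ⟨a, by omega⟩
    simp [purePt] at this
  · intro h
    have := congrFun h ⟨b, by omega⟩
    simp [purePt] at this

lemma sat_union13 {m n : ℕ} {P : SegrePt m n} {A B : Set (SegreVar m n)}
    (hA : SatisfiesEqs P A) (hB : SatisfiesEqs P B) : SatisfiesEqs P (A ∪ B) :=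
  fun v hv => hv.elim (hA v) (hB v)

lemma purePt_sat_xRange {m n a b c d : ℕ} (h : a < c ∨ d ≤ a) :
    SatisfiesEqs (purePt m n a b) (xRange m n c d) := by
  rintro v ⟨i, rfl, h1, h2⟩
  show (if (i:ℕ) = a then (1:ℂ) else 0) = 0
  rw [if_neg]; omega

lemma purePt_sat_yRange {m n a b c d : ℕ} (h : b < c ∨ d ≤ b) :
    SatisfiesEqs (purePt m n a b) (yRange m n c d) := by
  rintro v ⟨j, rfl, h1, h2⟩
  show (if (j:ℕ) = b then (1:ℂ) else 0) = 0
  rw [if_neg]; omega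

lemma killT13 {m n : ℕ} (Q : ℕ) (f : MvPolynomial (SegreVar m n) ℂ)
    (hsupp : ∀ d ∈ f.support, ∃ i j k, d = rep13 i j k ∧ PatNum13 Q (i:ℕ) (j:ℕ) (k:ℕ))
    (i₀ : Fin (m+1)) (j₀ k₀ : Fin (n+1)) (hpat : PatNum13 Q (i₀:ℕ) (j₀:ℕ) (k₀:ℕ))
    (a b : ℕ) (ha : a = (i₀:ℕ)) (hb : b = (k₀:ℕ))
    (hs : SingularAt f (purePt m n a b)) :
    coeff (rep13 i₀ j₀ k₀) f = 0 := by
  refine kill13 Q f hsupp i₀ j₀ k₀ hpat j₀ k₀ (Or.inl ⟨rfl, rfl⟩) (purePt m n a b) ?_ ?_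
    (hs (Sum.inr j₀))
  · intro i'; simp [purePt, ha]
  · intro j'; simp [purePt, hb]

lemma killP13 {m n : ℕ} (Q : ℕ) (f : MvPolynomial (SegreVar m n) ℂ)
    (hsupp : ∀ d ∈ f.support, ∃ i j k, d = rep13 i j k ∧ PatNum13 Q (i:ℕ) (j:ℕ) (k:ℕ))
    (i₀ : Fin (m+1)) (j₀ k₀ : Fin (n+1)) (hpat : PatNum13 Q (i₀:ℕ) (j₀:ℕ) (k₀:ℕ))
    (a b : ℕ) (ha : a = (i₀:ℕ)) (hb : b = (j₀:ℕ))
    (hs : SingularAt f (purePt m n a b)) :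
    coeff (rep13 i₀ j₀ k₀) f = 0 := by
  refine kill13 Q f hsupp i₀ j₀ k₀ hpat k₀ j₀ (Or.inr ⟨rfl, rfl⟩) (purePt m n a b) ?_ ?_
    (hs (Sum.inr k₀))
  · intro i'; simp [purePt, ha]
  · intro j'; simp [purePt, hb]

/-! ### Membership helpers -/

lemma inl_mem_xRange13 {m n a b : ℕ} {i : Fin (m+1)}
    (h : (Sum.inl i : SegreVar m n) ∈ xRange m n a b) : a ≤ (i:ℕ) ∧ (i:ℕ) < b := by
  obtain ⟨i', he, h1, h2⟩ := h
  injection he with he'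
  subst he'
  exact ⟨h1, h2⟩

lemma inr_mem_yRange13 {m n a b : ℕ} {j : Fin (n+1)}
    (h : (Sum.inr j : SegreVar m n) ∈ yRange m n a b) : a ≤ (j:ℕ) ∧ (j:ℕ) < b := by
  obtain ⟨j', he, h1, h2⟩ := h
  injection he with he'
  subst he'
  exact ⟨h1, h2⟩

lemma inl_notin_yRange13 {m n a b : ℕ} {i : Fin (m+1)}
    (h : (Sum.inl i : SegreVar m n) ∈ yRange m n a b) : False := by
  obtain ⟨j', he, _, _⟩ := h
  exact Sum.inl_ne_inr he

lemma inr_notin_xRange13 {m n a b : ℕ} {j : Fin (n+1)}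
    (h : (Sum.inr j : SegreVar m n) ∈ xRange m n a b) : False := by
  obtain ⟨i', he, _, _⟩ := h
  exact Sum.inr_ne_inl he

/-! ### Support pattern -/

lemma supp_pat13 {m n q β : ℕ} {f : MvPolynomial (SegreVar m n) ℂ}
    (hbi : IsBidegree12 f)
    (h2 : f ∈ varIdeal m n (E1E₂ m n q β)) (h3 : f ∈ varIdeal m n (E1E₃ m n q β))
    (h4 : f ∈ varIdeal m n (E1E₄ m n q β)) (h5 : f ∈ varIdeal m n (E1E₅ m n q β)) :
    ∀ d ∈ f.support, ∃ i j k, d = rep13 i j k ∧ PatNum13 (q+3*β) (i:ℕ) (j:ℕ) (k:ℕ) := by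
  intro d hd
  obtain ⟨i, j, k, rfl⟩ := bide_supp13 hbi d hd
  have main : ∀ (j' k' : Fin (n+1)), rep13 i j' k' ∈ f.support →
      ((k':ℕ) = q+3*β+78 ∨ (k':ℕ) = q+3*β+79) →
      PatNum13 (q+3*β) (i:ℕ) (j':ℕ) (k':ℕ) := by
    intro j' k' hd' hk'
    have get' : ∀ E : Set (SegreVar m n), f ∈ varIdeal m n E → ∃ v ∈ E, rep13 i j' k' v ≠ 0 :=
      fun E hE => mem_ideal_span_X_image.mp hE _ hd'
    have c2 : (2 ≤ (i:ℕ) ∧ (i:ℕ) < 4) ∨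
        (q ≤ (j':ℕ) ∧ (j':ℕ) < q+β ∨ q+3*β ≤ (j':ℕ) ∧ (j':ℕ) < q+3*β+48 ∨
          q+3*β+72 ≤ (j':ℕ) ∧ (j':ℕ) < q+3*β+74) ∨
        (q ≤ (k':ℕ) ∧ (k':ℕ) < q+β ∨ q+3*β ≤ (k':ℕ) ∧ (k':ℕ) < q+3*β+48 ∨
          q+3*β+72 ≤ (k':ℕ) ∧ (k':ℕ) < q+3*β+74) := by
      obtain ⟨v, hv, hv0⟩ := get' _ h2
      unfold E1E₂ at hv
      rcases keys13 hv0 with rfl | rfl | rfl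
      · refine Or.inl ?_
        rcases hv with (((h|h)|h)|h)
        · exact inl_mem_xRange13 h
        all_goals exact (inl_notin_yRange13 h).elim
      · refine Or.inr (Or.inl ?_)
        rcases hv with (((h|h)|h)|h)
        · exact (inr_notin_xRange13 h).elim
        · exact Or.inl (inr_mem_yRange13 h)
        · exact Or.inr (Or.inl (inr_mem_yRange13 h))
        · exact Or.inr (Or.inr (inr_mem_yRange13 h))
      · refine Or.inr (Or.inr ?_)
        rcases hv with (((h|h)|h)|h)
        · exact (inr_notin_xRange13 h).elim
        · exact Or.inl (inr_mem_yRange13 h)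
        · exact Or.inr (Or.inl (inr_mem_yRange13 h))
        · exact Or.inr (Or.inr (inr_mem_yRange13 h))
    have c3 : (4 ≤ (i:ℕ) ∧ (i:ℕ) < 6) ∨
        (q+β ≤ (j':ℕ) ∧ (j':ℕ) < q+2*β ∨ q+3*β ≤ (j':ℕ) ∧ (j':ℕ) < q+3*β+24 ∨
          q+3*β+48 ≤ (j':ℕ) ∧ (j':ℕ) < q+3*β+72 ∨
          q+3*β+74 ≤ (j':ℕ) ∧ (j':ℕ) < q+3*β+76) ∨
        (q+β ≤ (k':ℕ) ∧ (k':ℕ) < q+2*β ∨ q+3*β ≤ (k':ℕ) ∧ (k':ℕ) < q+3*β+24 ∨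
          q+3*β+48 ≤ (k':ℕ) ∧ (k':ℕ) < q+3*β+72 ∨
          q+3*β+74 ≤ (k':ℕ) ∧ (k':ℕ) < q+3*β+76) := by
      obtain ⟨v, hv, hv0⟩ := get' _ h3
      unfold E1E₃ at hv
      rcases keys13 hv0 with rfl | rfl | rfl
      · refine Or.inl ?_
        rcases hv with ((((h|h)|h)|h)|h)
        · exact inl_mem_xRange13 h
        all_goals exact (inl_notin_yRange13 h).elim
      · refine Or.inr (Or.inl ?_)
        rcases hv with ((((h|h)|h)|h)|h)
        · exact (inr_notin_xRange13 h).elim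
        · exact Or.inl (inr_mem_yRange13 h)
        · exact Or.inr (Or.inl (inr_mem_yRange13 h))
        · exact Or.inr (Or.inr (Or.inl (inr_mem_yRange13 h)))
        · exact Or.inr (Or.inr (Or.inr (inr_mem_yRange13 h)))
      · refine Or.inr (Or.inr ?_)
        rcases hv with ((((h|h)|h)|h)|h)
        · exact (inr_notin_xRange13 h).elim
        · exact Or.inl (inr_mem_yRange13 h)
        · exact Or.inr (Or.inl (inr_mem_yRange13 h))
        · exact Or.inr (Or.inr (Or.inl (inr_mem_yRange13 h)))
        · exact Or.inr (Or.inr (Or.inr (inr_mem_yRange13 h)))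
    have c4 : (6 ≤ (i:ℕ) ∧ (i:ℕ) < 8) ∨
        (q+2*β ≤ (j':ℕ) ∧ (j':ℕ) < q+3*β ∨ q+3*β+24 ≤ (j':ℕ) ∧ (j':ℕ) < q+3*β+72 ∨
          q+3*β+76 ≤ (j':ℕ) ∧ (j':ℕ) < q+3*β+78) ∨
        (q+2*β ≤ (k':ℕ) ∧ (k':ℕ) < q+3*β ∨ q+3*β+24 ≤ (k':ℕ) ∧ (k':ℕ) < q+3*β+72 ∨
          q+3*β+76 ≤ (k':ℕ) ∧ (k':ℕ) < q+3*β+78) := by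
      obtain ⟨v, hv, hv0⟩ := get' _ h4
      unfold E1E₄ at hv
      rcases keys13 hv0 with rfl | rfl | rfl
      · refine Or.inl ?_
        rcases hv with (((h|h)|h)|h)
        · exact inl_mem_xRange13 h
        all_goals exact (inl_notin_yRange13 h).elim
      · refine Or.inr (Or.inl ?_)
        rcases hv with (((h|h)|h)|h)
        · exact (inr_notin_xRange13 h).elim
        · exact Or.inl (inr_mem_yRange13 h)
        · exact Or.inr (Or.inl (inr_mem_yRange13 h))
        · exact Or.inr (Or.inr (inr_mem_yRange13 h))
      · refine Or.inr (Or.inr ?_)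
        rcases hv with (((h|h)|h)|h)
        · exact (inr_notin_xRange13 h).elim
        · exact Or.inl (inr_mem_yRange13 h)
        · exact Or.inr (Or.inl (inr_mem_yRange13 h))
        · exact Or.inr (Or.inr (inr_mem_yRange13 h))
    clear get' hd' hd h2 h3 h4 h5 hbi f
    have c2' : (2 ≤ (i:ℕ) ∧ (i:ℕ) < 4) ∨ (q ≤ (j':ℕ) ∧ (j':ℕ) < q+β ∨
        q+3*β ≤ (j':ℕ) ∧ (j':ℕ) < q+3*β+48 ∨
        q+3*β+72 ≤ (j':ℕ) ∧ (j':ℕ) < q+3*β+74) := by clear c3 c4; omega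
    have c3' : (4 ≤ (i:ℕ) ∧ (i:ℕ) < 6) ∨ (q+β ≤ (j':ℕ) ∧ (j':ℕ) < q+2*β ∨
        q+3*β ≤ (j':ℕ) ∧ (j':ℕ) < q+3*β+24 ∨
        q+3*β+48 ≤ (j':ℕ) ∧ (j':ℕ) < q+3*β+72 ∨
        q+3*β+74 ≤ (j':ℕ) ∧ (j':ℕ) < q+3*β+76) := by clear c2 c2' c4; omega
    have c4' : (6 ≤ (i:ℕ) ∧ (i:ℕ) < 8) ∨ (q+2*β ≤ (j':ℕ) ∧ (j':ℕ) < q+3*β ∨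
        q+3*β+24 ≤ (j':ℕ) ∧ (j':ℕ) < q+3*β+72 ∨
        q+3*β+76 ≤ (j':ℕ) ∧ (j':ℕ) < q+3*β+78) := by clear c2 c3 c2' c3'; omega
    clear c2 c3 c4
    simp only [PatNum13]
    refine ⟨hk', ?_⟩
    omega
  have hor : ((j:ℕ) = q+3*β+78 ∨ (j:ℕ) = q+3*β+79) ∨
      ((k:ℕ) = q+3*β+78 ∨ (k:ℕ) = q+3*β+79) := by
    obtain ⟨v, hv, hv0⟩ := mem_ideal_span_X_image.mp h5 _ hd
    unfold E1E₅ at hv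
    rcases keys13 hv0 with rfl | rfl | rfl
    · exact (inl_notin_yRange13 hv).elim
    · have := inr_mem_yRange13 hv; omega
    · have := inr_mem_yRange13 hv; omega
  rcases hor with hj | hk
  · have hd2 : rep13 i k j ∈ f.support := by rwa [← rep13_swap]
    exact ⟨i, k, j, rep13_swap i j k, main k j hd2 hj⟩
  · exact ⟨i, j, k, rfl, main j k hd hk⟩

/-- The equiabundant configuration `E₁(m,n)` is non-defective for `m ≥ 8` and
`n ≥ 3m² - 5m + 2`. -/

theorem statement13 (m n : ℕ) (hm : 8 ≤ m)
    (hn : 3 * (m : ℤ) ^ 2 - 5 * m + 2 ≤ (n : ℤ))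
    (q β : ℕ)
    (hq : (q : ℤ) = 3 * (m : ℤ) ^ 2 - 42 * m + 146)
    (hβ : (β : ℤ) = 12 * (m : ℤ) - 72) :
    ∃ (P : Fin 72 → SegrePt m n)
      (T₂₃ : Fin 2 → SegrePt m n) (T₂₄ : Fin 2 → SegrePt m n) (T₃₄ : Fin 2 → SegrePt m n),
      (∀ i, ValidPt (P i)) ∧
      (∀ i, ValidPt (T₂₃ i)) ∧ (∀ i, ValidPt (T₂₄ i)) ∧ (∀ i, ValidPt (T₃₄ i)) ∧
      (∀ i, SatisfiesEqs (P i) (E1E₅ m n q β)) ∧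
      (∀ i, SatisfiesEqs (T₂₃ i) (E1E₁ m n q β)) ∧ (∀ i, SatisfiesEqs (T₂₃ i) (E1E₂ m n q β)) ∧
        (∀ i, SatisfiesEqs (T₂₃ i) (E1E₃ m n q β)) ∧
      (∀ i, SatisfiesEqs (T₂₄ i) (E1E₁ m n q β)) ∧ (∀ i, SatisfiesEqs (T₂₄ i) (E1E₂ m n q β)) ∧
        (∀ i, SatisfiesEqs (T₂₄ i) (E1E₄ m n q β)) ∧
      (∀ i, SatisfiesEqs (T₃₄ i) (E1E₁ m n q β)) ∧ (∀ i, SatisfiesEqs (T₃₄ i) (E1E₃ m n q β)) ∧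
        (∀ i, SatisfiesEqs (T₃₄ i) (E1E₄ m n q β)) ∧
      ∀ f : MvPolynomial (SegreVar m n) ℂ,
        IsBidegree12 f →
        f ∈ varIdeal m n (E1E₁ m n q β) →
        f ∈ varIdeal m n (E1E₂ m n q β) →
        f ∈ varIdeal m n (E1E₃ m n q β) →
        f ∈ varIdeal m n (E1E₄ m n q β) →
        f ∈ varIdeal m n (E1E₅ m n q β) →
        (∀ i, SingularAt f (P i)) →
        (∀ i, SingularAt f (T₂₃ i)) → (∀ i, SingularAt f (T₂₄ i)) →
        (∀ i, SingularAt f (T₃₄ i)) → f = 0 := by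
  have h8 : (8:ℤ) ≤ (m:ℤ) := by exact_mod_cast hm
  have hQnZ : ((q:ℤ) + 3*(β:ℤ) + 80) ≤ (n:ℤ) := by rw [hq, hβ]; linarith [hn, h8]
  have hQn : q + 3*β + 80 ≤ n := by exact_mod_cast hQnZ
  refine ⟨fun t => purePt m n (xnum13 (t:ℕ)) (q+3*β+(t:ℕ)),
          fun s => purePt m n 7 (q+3*β+78+(s:ℕ)),
          fun s => purePt m n 5 (q+3*β+78+(s:ℕ)),
          fun s => purePt m n 3 (q+3*β+78+(s:ℕ)),
          ?_, ?_, ?_, ?_, ?_, ?_, ?_, ?_, ?_, ?_, ?_, ?_, ?_, ?_, ?_⟩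
  · intro t
    exact valid_purePt (by have := xnum13_le (t:ℕ); omega) (by have := t.isLt; omega)
  · intro s
    exact valid_purePt (by omega) (by have := s.isLt; omega)
  · intro s
    exact valid_purePt (by omega) (by have := s.isLt; omega)
  · intro s
    exact valid_purePt (by omega) (by have := s.isLt; omega)
  · -- P satisfies E₅
    intro t
    exact purePt_sat_yRange (by have := t.isLt; omega)
  · -- T₂₃ satisfies E₁
    intro s
    exact sat_union13 (purePt_sat_xRange (by omega))
      (purePt_sat_yRange (by omega))
  · -- T₂₃ satisfies E₂
    intro s
    exact sat_union13 (sat_union13 (sat_union13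
      (purePt_sat_xRange (by omega))
      (purePt_sat_yRange (by omega)))
      (purePt_sat_yRange (by omega)))
      (purePt_sat_yRange (by omega))
  · -- T₂₃ satisfies E₃
    intro s
    exact sat_union13 (sat_union13 (sat_union13 (sat_union13
      (purePt_sat_xRange (by omega))
      (purePt_sat_yRange (by omega)))
      (purePt_sat_yRange (by omega)))
      (purePt_sat_yRange (by omega)))
      (purePt_sat_yRange (by omega))
  · -- T₂₄ satisfies E₁
    intro s
    exact sat_union13 (purePt_sat_xRange (by omega))
      (purePt_sat_yRange (by omega))
  · -- T₂₄ satisfies E₂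
    intro s
    exact sat_union13 (sat_union13 (sat_union13
      (purePt_sat_xRange (by omega))
      (purePt_sat_yRange (by omega)))
      (purePt_sat_yRange (by omega)))
      (purePt_sat_yRange (by omega))
  · -- T₂₄ satisfies E₄
    intro s
    exact sat_union13 (sat_union13 (sat_union13
      (purePt_sat_xRange (by omega))
      (purePt_sat_yRange (by omega)))
      (purePt_sat_yRange (by omega)))
      (purePt_sat_yRange (by omega))
  · -- T₃₄ satisfies E₁
    intro s
    exact sat_union13 (purePt_sat_xRange (by omega))
      (purePt_sat_yRange (by omega))
  · -- T₃₄ satisfies E₃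
    intro s
    exact sat_union13 (sat_union13 (sat_union13 (sat_union13
      (purePt_sat_xRange (by omega))
      (purePt_sat_yRange (by omega)))
      (purePt_sat_yRange (by omega)))
      (purePt_sat_yRange (by omega)))
      (purePt_sat_yRange (by omega))
  · -- T₃₄ satisfies E₄
    intro s
    exact sat_union13 (sat_union13 (sat_union13
      (purePt_sat_xRange (by omega))
      (purePt_sat_yRange (by omega)))
      (purePt_sat_yRange (by omega)))
      (purePt_sat_yRange (by omega))
  · -- the main statement
    intro f hbi _ hI2 hI3 hI4 hI5 hP h23 h24 h34
    have hsupp := supp_pat13 hbi hI2 hI3 hI4 hI5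
    apply MvPolynomial.ext
    intro d
    rw [coeff_zero]
    by_cases hd : d ∈ f.support
    swap
    · exact notMem_support_iff.mp hd
    obtain ⟨i, j, k, rfl, hpat⟩ := hsupp d hd
    have hpat' := hpat
    simp only [PatNum13] at hpat'
    obtain ⟨hk, hblk⟩ := hpat'
    rcases hblk with ⟨hj1, hj2, hi | hi⟩ | ⟨hj1, hj2, hi | hi⟩ | ⟨hj1, hj2, hi | hi⟩
    · -- C₂₃, i = 6 : use P point
      have hjQ : (j:ℕ) - (q+3*β) < 72 := by omega
      refine killP13 (q+3*β) f hsupp i j k hpat _ _ ?_ ?_ (hP ⟨(j:ℕ) - (q+3*β), hjQ⟩)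
      · show xnum13 ((j:ℕ) - (q+3*β)) = (i:ℕ)
        unfold xnum13
        rw [if_pos (by omega)]
        omega
      · show q+3*β+((j:ℕ) - (q+3*β)) = (j:ℕ)
        omega
    · -- C₂₃, i = 7 : use T₂₃ point
      rcases hk with hk | hk
      · refine killT13 (q+3*β) f hsupp i j k hpat _ _ (by omega) ?_ (h23 ⟨0, by omega⟩)
        show q+3*β+78+(0:ℕ) = (k:ℕ)
        omega
      · refine killT13 (q+3*β) f hsupp i j k hpat _ _ (by omega) ?_ (h23 ⟨1, by omega⟩)
        show q+3*β+78+(1:ℕ) = (k:ℕ)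
        omega
    · -- C₂₄, i = 4 : use P point
      have hjQ : (j:ℕ) - (q+3*β) < 72 := by omega
      refine killP13 (q+3*β) f hsupp i j k hpat _ _ ?_ ?_ (hP ⟨(j:ℕ) - (q+3*β), hjQ⟩)
      · show xnum13 ((j:ℕ) - (q+3*β)) = (i:ℕ)
        unfold xnum13
        rw [if_neg (by omega), if_pos (by omega)]
        omega
      · show q+3*β+((j:ℕ) - (q+3*β)) = (j:ℕ)
        omega
    · -- C₂₄, i = 5 : use T₂₄ point
      rcases hk with hk | hk
      · refine killT13 (q+3*β) f hsupp i j k hpat _ _ (by omega) ?_ (h24 ⟨0, by omega⟩)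
        show q+3*β+78+(0:ℕ) = (k:ℕ)
        omega
      · refine killT13 (q+3*β) f hsupp i j k hpat _ _ (by omega) ?_ (h24 ⟨1, by omega⟩)
        show q+3*β+78+(1:ℕ) = (k:ℕ)
        omega
    · -- C₃₄, i = 2 : use P point
      have hjQ : (j:ℕ) - (q+3*β) < 72 := by omega
      refine killP13 (q+3*β) f hsupp i j k hpat _ _ ?_ ?_ (hP ⟨(j:ℕ) - (q+3*β), hjQ⟩)
      · show xnum13 ((j:ℕ) - (q+3*β)) = (i:ℕ)
        unfold xnum13
        rw [if_neg (by omega), if_neg (by omega)]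
        omega
      · show q+3*β+((j:ℕ) - (q+3*β)) = (j:ℕ)
        omega
    · -- C₃₄, i = 3 : use T₃₄ point
      rcases hk with hk | hk
      · refine killT13 (q+3*β) f hsupp i j k hpat _ _ (by omega) ?_ (h34 ⟨0, by omega⟩)
        show q+3*β+78+(0:ℕ) = (k:ℕ)
        omega
      · refine killT13 (q+3*β) f hsupp i j k hpat _ _ (by omega) ?_ (h34 ⟨1, by omega⟩)
        show q+3*β+78+(1:ℕ) = (k:ℕ)
        omega
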